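/- arXiv:2507.08295 — 2 statements merged into one kernel-verified Lean document; each statement's English description precedes it below -/
import Mathlib

section
/- Let Ω ⊂ ℝⁿ be a domain, D ⊂ ∂Ω closed with D × ℝ an n-set in ℝ^{n+1}, and define Ω_D := (Ω×{0}) ∪ (D×ℝ). Let s ∈ (0,1), p ∈ (1,∞), and let f ∈ L^p(Ω) satisfy the weighted bound ∫_Ω |f|^p dist(·,D)^{−sp} dx < ∞ together with finite Gagliardo seminorm on Ω. Define the zero extension E₀f on Ω_D by E₀f(x,0) = f(x) for x ∈ Ω and E₀f ≡ 0 on D × ℝ. Then ‖E₀f‖_{W^{s,p}(Ω_D)} ≤ C (‖f‖_{L^p(Ω)} + [f]_{W^{s,p}(Ω)} + (∫_Ω |f|^p dist(·,D)^{−sp})^{1/p}), where the norm on Ω_D uses the measure H^n and kernel |x−y|^{−(n+sp)} (written as |x−y|^{n−sp} exponent normalization in the Jonsson–Wallin convention on n-sets of ℝ^{n+1}). -/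
open Metric Set MeasureTheory
open scoped ENNReal Classical

/-- The isometric embedding `(x, t) ↦ (x₁, …, xₙ, t)` of `ℝⁿ × ℝ` into `ℝ^{n+1}`. -/
noncomputable def emb (n : ℕ) (x : EuclideanSpace ℝ (Fin n)) (t : ℝ) :
    EuclideanSpace ℝ (Fin (n + 1)) :=
  (EuclideanSpace.equiv (Fin (n + 1)) ℝ).symm (Fin.snoc (fun i => x i) t)

/-- The projection `ℝ^{n+1} → ℝⁿ` onto the first `n` coordinates. -/
noncomputable def projInit (n : ℕ) (z : EuclideanSpace ℝ (Fin (n + 1))) :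
    EuclideanSpace ℝ (Fin n) :=
  (EuclideanSpace.equiv (Fin n) ℝ).symm (fun i => z i.castSucc)

open scoped NNReal

variable {n : ℕ}

lemma emb_castSucc (x : EuclideanSpace ℝ (Fin n)) (t : ℝ) (i : Fin n) :
    emb n x t i.castSucc = x i := by
  simp [emb, Fin.snoc_castSucc]

lemma emb_last (x : EuclideanSpace ℝ (Fin n)) (t : ℝ) : emb n x t (Fin.last n) = t := by
  simp [emb]

lemma projInit_apply (z : EuclideanSpace ℝ (Fin (n+1))) (i : Fin n) :
    projInit n z i = z i.castSucc := rfl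

lemma projInit_emb (x : EuclideanSpace ℝ (Fin n)) (t : ℝ) : projInit n (emb n x t) = x := by
  ext i; rw [projInit_apply, emb_castSucc]

lemma emb_projInit (w : EuclideanSpace ℝ (Fin (n+1))) :
    emb n (projInit n w) (w (Fin.last n)) = w := by
  ext i
  induction i using Fin.lastCases with
  | last => rw [emb_last]
  | cast j => rw [emb_castSucc, projInit_apply]

lemma dist_emb (x y : EuclideanSpace ℝ (Fin n)) (t u : ℝ) :
    dist (emb n x t) (emb n y u) = Real.sqrt (dist x y ^ 2 + dist t u ^ 2) := by
  rw [EuclideanSpace.dist_eq, EuclideanSpace.dist_eq (x := x)]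
  congr 1
  rw [Fin.sum_univ_castSucc]
  rw [Real.sq_sqrt (by positivity)]
  simp [emb_castSucc, emb_last]
variable {n : ℕ}

lemma isometry_emb (t : ℝ) : Isometry (fun x : EuclideanSpace ℝ (Fin n) => emb n x t) :=
  Isometry.of_dist_eq fun x y => by
    rw [dist_emb, dist_self]
    simp [Real.sqrt_sq dist_nonneg]

lemma lipschitz_symm_equiv :
    ∃ κ : ℝ≥0, LipschitzWith κ ((WithLp.equiv 2 (Fin n → ℝ)).symm) := by
  refine ⟨(Fintype.card (Fin n) : ℝ≥0) ^ (1 / (2:ℝ≥0∞)).toReal, fun x y => ?_⟩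
  have h := PiLp.antilipschitzWith_ofLp 2 (fun _ : Fin n => ℝ)
      ((WithLp.equiv 2 (Fin n → ℝ)).symm x) ((WithLp.equiv 2 (Fin n → ℝ)).symm y)
  simpa using h

lemma hausdorff_le_volume :
    ∃ c : ℝ≥0, 1 ≤ c ∧
      (μH[(n:ℝ)] : Measure (EuclideanSpace ℝ (Fin n))) ≤ (c : ℝ≥0∞) • volume := by
  obtain ⟨κ, hκ⟩ := lipschitz_symm_equiv (n := n)
  refine ⟨max 1 (κ ^ (n:ℝ)), le_max_left _ _, ?_⟩
  refine Measure.le_iff.2 fun A hA => ?_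
  have key : μH[(n:ℝ)] A ≤ (κ : ℝ≥0∞) ^ (n:ℝ) * μH[(n:ℝ)] ((WithLp.equiv 2 (Fin n → ℝ)) '' A) := by
    have := hκ.hausdorffMeasure_image_le (Nat.cast_nonneg n)
        ((WithLp.equiv 2 (Fin n → ℝ)) '' A)
    simpa [Set.image_image] using this
  have hpi : (μH[(n:ℝ)] : Measure (Fin n → ℝ)) = volume := by
    simpa using hausdorffMeasure_pi_real (ι := Fin n)
  have hvol : volume ((WithLp.equiv 2 (Fin n → ℝ)) '' A) = volume A := by
    have hmp := (EuclideanSpace.volume_preserving_symm_measurableEquiv_toLp (Fin n)).symm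
    have heq : ⇑(MeasurableEquiv.toLp 2 (Fin n → ℝ)).symm.symm
        = ⇑(WithLp.equiv 2 (Fin n → ℝ)).symm := rfl
    rw [Equiv.image_eq_preimage_symm, ← heq, hmp.measure_preimage hA.nullMeasurableSet]
  calc μH[(n:ℝ)] A ≤ (κ : ℝ≥0∞) ^ (n:ℝ) * μH[(n:ℝ)] ((WithLp.equiv 2 (Fin n → ℝ)) '' A) := key
    _ = (κ : ℝ≥0∞) ^ (n:ℝ) * volume A := by rw [hpi, hvol]
    _ ≤ ((max 1 (κ ^ (n:ℝ)) : ℝ≥0) : ℝ≥0∞) * volume A := by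
        gcongr
        rw [← ENNReal.coe_rpow_of_nonneg _ (Nat.cast_nonneg n)]
        exact_mod_cast le_max_right _ _
    _ = ((max 1 (κ ^ (n:ℝ)) : ℝ≥0) : ℝ≥0∞) • volume A := rfl
lemma lintegral_H_le {c : ℝ≥0}
    (hc : (μH[(n:ℝ)] : Measure (EuclideanSpace ℝ (Fin n))) ≤ (c : ℝ≥0∞) • volume)
    (s : Set (EuclideanSpace ℝ (Fin n))) (g : EuclideanSpace ℝ (Fin n) → ℝ≥0∞) :
    ∫⁻ x in s, g x ∂μH[(n:ℝ)] ≤ (c : ℝ≥0∞) * ∫⁻ x in s, g x ∂volume := by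
  have h := Measure.restrict_mono (le_refl s) hc
  rw [Measure.restrict_smul] at h
  calc ∫⁻ x in s, g x ∂μH[(n:ℝ)] ≤ ∫⁻ x, g x ∂((c : ℝ≥0∞) • volume.restrict s) :=
        lintegral_mono' h (le_refl g)
    _ = (c : ℝ≥0∞) * ∫⁻ x in s, g x ∂volume := lintegral_smul_measure _ _

lemma sigmaFinite_muH : SigmaFinite (μH[(n:ℝ)] : Measure (EuclideanSpace ℝ (Fin n))) := by
  obtain ⟨c, -, hc⟩ := hausdorff_le_volume (n := n)
  have : IsLocallyFiniteMeasure (μH[(n:ℝ)] : Measure (EuclideanSpace ℝ (Fin n))) := by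
    refine ⟨fun x => ⟨ball x 1, ball_mem_nhds x one_pos, ?_⟩⟩
    calc μH[(n:ℝ)] (ball x 1) ≤ ((c : ℝ≥0∞) • (volume : Measure _)) (ball x 1) :=
          Measure.le_iff'.1 hc _
      _ = (c : ℝ≥0∞) * volume (ball x 1) := rfl
      _ < ⊤ := ENNReal.mul_lt_top ENNReal.coe_lt_top measure_ball_lt_top
  exact sigmaFinite_of_locallyFinite

lemma measurableEmbedding_emb (t : ℝ) :
    MeasurableEmbedding (fun x : EuclideanSpace ℝ (Fin n) => emb n x t) :=
  (isometry_emb t).isClosedEmbedding.measurableEmbedding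

lemma restrict_image_emb (Ω : Set (EuclideanSpace ℝ (Fin n))) :
    (μH[(n:ℝ)] : Measure (EuclideanSpace ℝ (Fin (n+1)))).restrict
        ((fun x => emb n x 0) '' Ω)
      = Measure.map (fun x => emb n x 0) ((μH[(n:ℝ)] : Measure _).restrict Ω) := by
  ext A hA
  rw [Measure.map_apply (measurableEmbedding_emb 0).measurable hA,
    Measure.restrict_apply hA,
    Measure.restrict_apply ((measurableEmbedding_emb 0).measurable hA)]
  have himg : A ∩ (fun x => emb n x 0) '' Ω
      = (fun x => emb n x 0) '' ((fun x => emb n x 0) ⁻¹' A ∩ Ω) := by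
    rw [Set.inter_comm, ← Set.image_inter_preimage, Set.inter_comm]
  rw [himg, (isometry_emb 0).hausdorffMeasure_image (Or.inl (Nat.cast_nonneg n)),
    Set.inter_comm]

lemma lintegral_image_emb (Ω : Set (EuclideanSpace ℝ (Fin n)))
    (g : EuclideanSpace ℝ (Fin (n+1)) → ℝ≥0∞) :
    ∫⁻ z in (fun x => emb n x 0) '' Ω, g z ∂μH[(n:ℝ)]
      = ∫⁻ x in Ω, g (emb n x 0) ∂μH[(n:ℝ)] := by
  rw [restrict_image_emb]
  exact (measurableEmbedding_emb 0).lintegral_map _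
lemma continuous_projInit : Continuous (projInit n) := by
  have h1 : Continuous ((WithLp.equiv 2 (Fin n → ℝ)).symm) := PiLp.continuous_toLp _ _
  have h2 : Continuous fun z : EuclideanSpace ℝ (Fin (n+1)) => fun i : Fin n => z i.castSucc := by
    refine continuous_pi fun i => ?_
    exact (continuous_apply (i.castSucc : Fin (n+1))).comp (PiLp.continuous_ofLp 2 _)
  exact h1.comp h2

lemma S_eq (D : Set (EuclideanSpace ℝ (Fin n))) :
    {w | ∃ x ∈ D, ∃ t : ℝ, w = emb n x t} = projInit n ⁻¹' D := by
  ext w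
  constructor
  · rintro ⟨x, hx, t, rfl⟩
    simpa [Set.mem_preimage, projInit_emb] using hx
  · intro hw
    exact ⟨projInit n w, hw, w (Fin.last n), (emb_projInit w).symm⟩

lemma dist_emb_ge (x : EuclideanSpace ℝ (Fin n)) (w : EuclideanSpace ℝ (Fin (n+1))) :
    dist x (projInit n w) ≤ dist (emb n x 0) w := by
  conv_rhs => rw [← emb_projInit w]
  rw [dist_emb]
  calc dist x (projInit n w) = Real.sqrt (dist x (projInit n w) ^ 2) :=
        (Real.sqrt_sq dist_nonneg).symm
    _ ≤ _ := Real.sqrt_le_sqrt (by nlinarith [sq_nonneg (dist (0:ℝ) (w (Fin.last n)))])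

/-- Pure real-number algebra for the annulus estimate. -/
lemma annulus_algebra {δ sp A : ℝ} (hδ : 0 < δ) (hsp : 0 < sp) (k : ℕ) :
    (((2:ℝ)^k * δ) ^ ((n:ℝ) + sp))⁻¹ * (A * ((2:ℝ)^(k+2) * δ) ^ n)
      = (A * 4^n * (δ ^ sp)⁻¹) * (((2:ℝ) ^ sp)⁻¹)^k := by
  have h2k : (0:ℝ) < 2^k := by positivity
  have hR : (0:ℝ) < 2^k * δ := by positivity
  have e1 : ((2:ℝ)^k * δ) ^ ((n:ℝ) + sp)
      = ((2:ℝ)^k * δ) ^ n * ((2:ℝ)^k) ^ sp * δ ^ sp := by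
    rw [Real.rpow_add hR, Real.rpow_natCast,
      Real.mul_rpow (le_of_lt h2k) (le_of_lt hδ)]
    ring
  have e2 : ((2:ℝ)^k)^sp = ((2:ℝ)^sp)^k := by
    rw [← Real.rpow_natCast (2:ℝ) k, ← Real.rpow_mul (by norm_num),
      ← Real.rpow_natCast ((2:ℝ)^sp) k, ← Real.rpow_mul (by norm_num), mul_comm]
  have e3 : ((2:ℝ)^(k+2) * δ) ^ n = (2^k*δ)^n * 4^n := by
    rw [← mul_pow]; ring_nf
  have h2sp : (0:ℝ) < (2:ℝ)^sp := Real.rpow_pos_of_pos (by norm_num) _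
  have hδsp : (0:ℝ) < δ^sp := Real.rpow_pos_of_pos hδ _
  rw [e1, e2, e3]
  field_simp
  rw [one_div, inv_pow, mul_comm _ A, mul_assoc, mul_inv_cancel₀ (by positivity), mul_one]
lemma key_J {s p A : ℝ} (hs : 0 < s) (hs1 : s < 1) (hp : 1 < p) (hA : 1 ≤ A)
    {D : Set (EuclideanSpace ℝ (Fin n))} (hD : IsClosed D)
    (hnsetU : ∀ z ∈ projInit n ⁻¹' D, ∀ r : ℝ, 0 < r →
      μH[(n:ℝ)] ((projInit n ⁻¹' D) ∩ ball z r) ≤ ENNReal.ofReal (A * r ^ n))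
    (x : EuclideanSpace ℝ (Fin n)) (hδ : 0 < infDist x D) (hDne : D.Nonempty) :
    ∫⁻ w in projInit n ⁻¹' D,
        ENNReal.ofReal ((dist (emb n x 0) w ^ ((n:ℝ) + s * p))⁻¹) ∂μH[(n:ℝ)]
      ≤ ENNReal.ofReal ((A * 4^n * (1 - ((2:ℝ)^(s*p))⁻¹)⁻¹) * (infDist x D ^ (s*p))⁻¹) := by
  set δ := infDist x D with hδdef
  set z := emb n x 0 with hz
  set SS := projInit n ⁻¹' D with hSS
  set sp := s * p with hspdef
  have hsp : 0 < sp := mul_pos hs (lt_trans one_pos hp)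
  have hα : (0:ℝ) ≤ (n:ℝ) + sp := by positivity
  have hSmeas : MeasurableSet SS := (hD.preimage continuous_projInit).measurableSet
  -- lower bound on dist z w for w ∈ SS
  have hlow : ∀ w ∈ SS, δ ≤ dist z w := by
    intro w hw
    calc δ ≤ dist x (projInit n w) := infDist_le_dist_of_mem hw
      _ ≤ dist z w := dist_emb_ge x w
  -- point y ∈ D near x, giving center z' ∈ SS
  obtain ⟨y, hy, hxy⟩ := (infDist_lt_iff hDne).1 (by linarith : infDist x D < 2 * δ)
  set z' := emb n y 0 with hz'
  have hz'S : z' ∈ SS := by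
    rw [hSS, Set.mem_preimage, hz', projInit_emb]; exact hy
  have hzz' : dist z z' < 2 * δ := by
    rw [hz, hz', (isometry_emb (n := n) 0).dist_eq]
    exact hxy
  -- annuli
  set Ak : ℕ → Set (EuclideanSpace ℝ (Fin (n+1))) :=
    fun k => SS ∩ (ball z (2^(k+1) * δ) \ ball z (2^k * δ)) with hAk
  have hAkmeas : ∀ k, MeasurableSet (Ak k) :=
    fun k => hSmeas.inter (measurableSet_ball.diff measurableSet_ball)
  have hcover : SS ⊆ ⋃ k : ℕ, Ak k := by
    intro w hw
    have hdw : δ ≤ dist z w := hlow w hw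
    have hdwpos : 0 < dist z w := lt_of_lt_of_le hδ hdw
    set m : ℕ := ⌊dist z w / δ⌋₊ with hm
    have hm1 : 1 ≤ m := Nat.le_floor (by rw [le_div_iff₀ hδ]; simpa using hdw)
    set k := Nat.log 2 m with hk
    have h1 : (2:ℕ)^k ≤ m := Nat.pow_log_le_self 2 (by omega)
    have h2 : m < 2^(k+1) := Nat.lt_pow_succ_log_self one_lt_two m
    refine Set.mem_iUnion.2 ⟨k, hw, ?_, ?_⟩
    · rw [mem_ball, dist_comm]
      have : dist z w / δ < m + 1 := Nat.lt_floor_add_one _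
      have hm2 : (m:ℝ) + 1 ≤ 2^(k+1) := by exact_mod_cast Nat.succ_le_of_lt h2
      have : dist z w < 2^(k+1) * δ := by
        rw [div_lt_iff₀ hδ] at this
        calc dist z w < ((m:ℝ)+1) * δ := by linarith
          _ ≤ 2^(k+1) * δ := by nlinarith
      exact this
    · rw [mem_ball, dist_comm]
      push_neg
      have h1' : (2:ℝ)^k ≤ m := by exact_mod_cast h1
      have : (2:ℝ)^k ≤ dist z w / δ := le_trans h1' (Nat.floor_le (by positivity))
      rw [le_div_iff₀ hδ] at this
      linarith
  -- bound each annulus integral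
  have hannulus : ∀ k : ℕ,
      ∫⁻ w in Ak k, ENNReal.ofReal ((dist z w ^ ((n:ℝ) + sp))⁻¹) ∂μH[(n:ℝ)]
        ≤ ENNReal.ofReal ((A * 4^n * (δ^sp)⁻¹) * (((2:ℝ)^sp)⁻¹)^k) := by
    intro k
    have hRk : (0:ℝ) < 2^k * δ := by positivity
    have step1 : ∫⁻ w in Ak k, ENNReal.ofReal ((dist z w ^ ((n:ℝ) + sp))⁻¹) ∂μH[(n:ℝ)]
        ≤ ENNReal.ofReal ((((2:ℝ)^k * δ) ^ ((n:ℝ) + sp))⁻¹) * μH[(n:ℝ)] (Ak k) := by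
      rw [← setLIntegral_const (Ak k) _]
      refine setLIntegral_mono' (hAkmeas k) fun w hw => ?_
      refine ENNReal.ofReal_le_ofReal ?_
      have hge : 2^k * δ ≤ dist z w := by
        have := hw.2.2
        rw [mem_ball, dist_comm] at this
        linarith [not_lt.1 this]
      exact inv_anti₀ (Real.rpow_pos_of_pos hRk _)
        (Real.rpow_le_rpow (le_of_lt hRk) hge hα)
    have step2 : μH[(n:ℝ)] (Ak k) ≤ ENNReal.ofReal (A * ((2:ℝ)^(k+2) * δ)^n) := by
      have hsub : Ak k ⊆ SS ∩ ball z' (2^(k+2) * δ) := by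
        rintro w ⟨hwS, hwb, -⟩
        refine ⟨hwS, ?_⟩
        rw [mem_ball] at hwb ⊢
        calc dist w z' ≤ dist w z + dist z z' := dist_triangle _ _ _
          _ < 2^(k+1) * δ + 2 * δ := by linarith
          _ ≤ 2^(k+2) * δ := by
              have h2 : (2:ℝ) ≤ 2^(k+1) := by
                calc (2:ℝ) = 2^1 := (pow_one 2).symm
                  _ ≤ 2^(k+1) := pow_le_pow_right₀ (by norm_num) (by omega)
              have : (2:ℝ)^(k+2) = 2^(k+1) + 2^(k+1) := by ring
              nlinarith [hδ.le]
      calc μH[(n:ℝ)] (Ak k) ≤ μH[(n:ℝ)] (SS ∩ ball z' (2^(k+2) * δ)) := measure_mono hsub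
        _ ≤ ENNReal.ofReal (A * ((2:ℝ)^(k+2) * δ)^n) :=
            hnsetU z' hz'S (2^(k+2) * δ) (by positivity)
    calc ∫⁻ w in Ak k, ENNReal.ofReal ((dist z w ^ ((n:ℝ) + sp))⁻¹) ∂μH[(n:ℝ)]
        ≤ ENNReal.ofReal ((((2:ℝ)^k * δ) ^ ((n:ℝ) + sp))⁻¹)
            * ENNReal.ofReal (A * ((2:ℝ)^(k+2) * δ)^n) := by
          refine le_trans step1 ?_
          exact mul_le_mul_right step2 _
      _ = ENNReal.ofReal ((((2:ℝ)^k * δ) ^ ((n:ℝ) + sp))⁻¹ * (A * ((2:ℝ)^(k+2) * δ)^n)) := by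
          rw [← ENNReal.ofReal_mul (by positivity)]
      _ = ENNReal.ofReal ((A * 4^n * (δ^sp)⁻¹) * (((2:ℝ)^sp)⁻¹)^k) := by
          rw [annulus_algebra hδ hsp]
  -- sum up
  have hq0 : (0:ℝ) ≤ ((2:ℝ)^sp)⁻¹ := by positivity
  have hq1 : ((2:ℝ)^sp)⁻¹ < 1 := by
    rw [inv_lt_one_iff₀]
    right
    exact (Real.one_lt_rpow_iff_of_pos (by norm_num)).2 (Or.inl ⟨one_lt_two, hsp⟩)
  calc ∫⁻ w in SS, ENNReal.ofReal ((dist z w ^ ((n:ℝ) + sp))⁻¹) ∂μH[(n:ℝ)]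
      ≤ ∫⁻ w in ⋃ k : ℕ, Ak k, ENNReal.ofReal ((dist z w ^ ((n:ℝ) + sp))⁻¹) ∂μH[(n:ℝ)] :=
        lintegral_mono' (Measure.restrict_mono hcover (le_refl _)) (le_refl _)
    _ ≤ ∑' k : ℕ, ∫⁻ w in Ak k, ENNReal.ofReal ((dist z w ^ ((n:ℝ) + sp))⁻¹) ∂μH[(n:ℝ)] :=
        lintegral_iUnion_le _ _
    _ ≤ ∑' k : ℕ, ENNReal.ofReal ((A * 4^n * (δ^sp)⁻¹) * (((2:ℝ)^sp)⁻¹)^k) :=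
        ENNReal.tsum_le_tsum hannulus
    _ = ENNReal.ofReal (A * 4^n * (δ^sp)⁻¹) * ∑' k : ℕ, (ENNReal.ofReal (((2:ℝ)^sp)⁻¹))^k := by
        rw [← ENNReal.tsum_mul_left]
        congr 1
        funext k
        rw [← ENNReal.ofReal_pow hq0, ← ENNReal.ofReal_mul (by positivity)]
    _ = ENNReal.ofReal (A * 4^n * (δ^sp)⁻¹) * (1 - ENNReal.ofReal (((2:ℝ)^sp)⁻¹))⁻¹ := by
        rw [ENNReal.tsum_geometric]
    _ = ENNReal.ofReal ((A * 4^n * (1 - ((2:ℝ)^sp)⁻¹)⁻¹) * (δ^sp)⁻¹) := by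
        rw [← ENNReal.ofReal_one, ← ENNReal.ofReal_sub _ hq0,
          ← ENNReal.ofReal_inv_of_pos (by linarith), ← ENNReal.ofReal_mul (by positivity)]
        congr 1
        ring
lemma continuous_eval_last : Continuous (fun z : EuclideanSpace ℝ (Fin (n+1)) => z (Fin.last n)) :=
  (continuous_apply (Fin.last n)).comp (PiLp.continuous_ofLp 2 _)


/-- The zero extension `E₀f` of `f : Ω → ℝ` to `Ω_D = (Ω×{0}) ∪ (D×ℝ)` is bounded from the
weighted fractional Sobolev space on `Ω` into `W^{s,p}(Ω_D)` (with respect to the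
`n`-dimensional Hausdorff measure), provided `D×ℝ` is an `n`-set in `ℝ^{n+1}`. -/
theorem stmt_12 {n : ℕ} (s p : ℝ) (hs : s ∈ Set.Ioo (0:ℝ) 1) (hp : 1 < p)
    (Ω D : Set (EuclideanSpace ℝ (Fin n)))
    (hΩopen : IsOpen Ω) (hΩconn : IsConnected Ω)
    (hD : IsClosed D) (hDsub : D ⊆ frontier Ω)
    (S ΩD : Set (EuclideanSpace ℝ (Fin (n + 1))))
    (hS : S = {w | ∃ x ∈ D, ∃ t : ℝ, w = emb n x t})
    (hΩD : ΩD = {w | ∃ x ∈ Ω, w = emb n x 0} ∪ S)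
    (A : ℝ) (hA : 1 ≤ A)
    (hnset : ∀ z ∈ S, ∀ r : ℝ, 0 < r →
      ENNReal.ofReal (r ^ n / A) ≤ μH[(n : ℝ)] (S ∩ ball z r) ∧
        μH[(n : ℝ)] (S ∩ ball z r) ≤ ENNReal.ofReal (A * r ^ n)) :
    ∃ C : ℝ, 0 < C ∧
    ∀ (f : EuclideanSpace ℝ (Fin n) → ℝ), Measurable f →
    ∀ F : EuclideanSpace ℝ (Fin (n + 1)) → ℝ,
      (F = fun z => if z (Fin.last n) = 0 ∧ projInit n z ∈ Ω then f (projInit n z) else 0) →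
      (∫⁻ z in ΩD, ENNReal.ofReal (|F z| ^ p) ∂μH[(n : ℝ)]) ^ (1 / p) +
        (∫⁻ z in ΩD, ∫⁻ w in ΩD,
          ENNReal.ofReal (|F z - F w| ^ p / dist z w ^ ((n : ℝ) + s * p))
            ∂μH[(n : ℝ)] ∂μH[(n : ℝ)]) ^ (1 / p)
      ≤ ENNReal.ofReal C *
        ((∫⁻ x in Ω, ENNReal.ofReal (|f x| ^ p)) ^ (1 / p) +
         (∫⁻ x in Ω, ∫⁻ y in Ω,
            ENNReal.ofReal (|f x - f y| ^ p / dist x y ^ ((n : ℝ) + s * p))) ^ (1 / p) +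
         (∫⁻ x in Ω, ENNReal.ofReal (|f x| ^ p / infDist x D ^ (s * p))) ^ (1 / p)) := by
  obtain ⟨hs0, hs1⟩ := hs
  have hp0 : (0:ℝ) < p := lt_trans one_pos hp
  have hp0' : p ≠ 0 := ne_of_gt hp0
  have hsp : 0 < s * p := mul_pos hs0 hp0
  have hα : (0:ℝ) ≤ (n:ℝ) + s * p := by positivity
  set α := (n:ℝ) + s * p with hαdef
  -- the embedding
  set e : EuclideanSpace ℝ (Fin n) → EuclideanSpace ℝ (Fin (n+1)) := fun x => emb n x 0 with he
  have hiso : Isometry e := isometry_emb 0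
  have hemb : MeasurableEmbedding e := measurableEmbedding_emb 0
  set P : Set (EuclideanSpace ℝ (Fin (n+1))) := e '' Ω with hPdef
  have hPeq : {w | ∃ x ∈ Ω, w = emb n x 0} = P := by
    ext w; constructor
    · rintro ⟨x, hx, rfl⟩; exact ⟨x, hx, rfl⟩
    · rintro ⟨x, hx, rfl⟩; exact ⟨x, hx, rfl⟩
  have hSpre : S = projInit n ⁻¹' D := by rw [hS, S_eq]
  have hΩD' : ΩD = P ∪ S := by rw [hΩD, hPeq]
  have hSmeas : MeasurableSet S := by
    rw [hSpre]; exact (hD.preimage continuous_projInit).measurableSet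
  have hPmeas : MeasurableSet P := hemb.measurableSet_image' hΩopen.measurableSet
  -- measure comparison on ℝⁿ
  obtain ⟨c, hc1, hc⟩ := hausdorff_le_volume (n := n)
  haveI : SigmaFinite (μH[(n:ℝ)] : Measure (EuclideanSpace ℝ (Fin n))) := sigmaFinite_muH
  have hrestr : (μH[(n:ℝ)] : Measure (EuclideanSpace ℝ (Fin (n+1)))).restrict P
      = Measure.map e ((μH[(n:ℝ)] : Measure (EuclideanSpace ℝ (Fin n))).restrict Ω) :=
    restrict_image_emb Ω
  haveI hsfP : SFinite ((μH[(n:ℝ)] : Measure (EuclideanSpace ℝ (Fin (n+1)))).restrict P) := by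
    rw [hrestr]; infer_instance
  haveI hsfS : SFinite ((μH[(n:ℝ)] : Measure (EuclideanSpace ℝ (Fin (n+1)))).restrict S) := by
    rcases Set.eq_empty_or_nonempty S with hSe | ⟨z₀, hz₀⟩
    · rw [hSe, Measure.restrict_empty]; infer_instance
    · have : SigmaFinite ((μH[(n:ℝ)] : Measure (EuclideanSpace ℝ (Fin (n+1)))).restrict S) := by
        refine ⟨⟨⟨fun k => ball z₀ (k+1), fun _ => trivial, fun k => ?_, ?_⟩⟩⟩
        · rw [Measure.restrict_apply measurableSet_ball, Set.inter_comm]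
          calc μH[(n:ℝ)] (S ∩ ball z₀ (k+1)) ≤ ENNReal.ofReal (A * ((k:ℝ)+1)^n) :=
                (hnset z₀ hz₀ ((k:ℝ)+1) (by positivity)).2
            _ < ⊤ := ENNReal.ofReal_lt_top
        · ext w
          simp only [Set.mem_iUnion, mem_ball, Set.mem_univ, iff_true]
          exact ⟨⌈dist w z₀⌉₊, lt_of_le_of_lt (Nat.le_ceil _) (by exact_mod_cast lt_add_one _)⟩
      infer_instance
  -- basic facts about D and Ω
  have hDΩ : ∀ x ∈ D, x ∉ Ω := by
    intro x hx hxΩ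
    have := hDsub hx
    rw [hΩopen.frontier_eq] at this
    exact this.2 hxΩ
  have hδpos : D.Nonempty → ∀ x ∈ Ω, 0 < infDist x D := by
    intro hDne x hx
    rw [← hD.notMem_iff_infDist_pos hDne]
    exact fun hxD => hDΩ x hxD hx
  -- the constant
  set K : ℝ := A * 4^n * (1 - ((2:ℝ)^(s*p))⁻¹)⁻¹ with hKdef
  have hq1 : ((2:ℝ)^(s*p))⁻¹ < 1 := by
    rw [inv_lt_one_iff₀]
    right
    exact (Real.one_lt_rpow_iff_of_pos (by norm_num)).2 (Or.inl ⟨one_lt_two, hsp⟩)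
  have hq0 : (0:ℝ) ≤ ((2:ℝ)^(s*p))⁻¹ := by positivity
  have hK0 : 0 < K := by
    apply mul_pos (by positivity)
    rw [inv_pos]; linarith
  set B : ℝ≥0∞ := (c:ℝ≥0∞)^2 + 2 * ENNReal.ofReal K * c + (c:ℝ≥0∞) with hBdef
  have hBne : B ≠ ⊤ := by
    rw [hBdef]
    refine ENNReal.add_ne_top.2 ⟨ENNReal.add_ne_top.2 ⟨?_, ?_⟩, ENNReal.coe_ne_top⟩
    · exact (ENNReal.pow_ne_top ENNReal.coe_ne_top)
    · exact ENNReal.mul_ne_top (ENNReal.mul_ne_top (by norm_num) ENNReal.ofReal_ne_top)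
        ENNReal.coe_ne_top
  have hB1 : (1:ℝ≥0∞) ≤ B := by
    rw [hBdef]
    calc (1:ℝ≥0∞) ≤ (c:ℝ≥0∞) := by exact_mod_cast hc1
      _ ≤ _ := le_add_self
  have hBt : 0 < B.toReal := ENNReal.toReal_pos (zero_lt_one.trans_le hB1).ne' hBne
  refine ⟨(B.toReal) ^ (1/p), Real.rpow_pos_of_pos hBt _, ?_⟩
  intro f hf F hF
  -- measurability of F and of the Gagliardo kernel
  have hFmeas : Measurable F := by
    rw [hF]
    refine Measurable.ite ?_ (hf.comp continuous_projInit.measurable) measurable_const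
    exact ((continuous_eval_last.measurable (measurableSet_singleton (0:ℝ)))).inter
      (continuous_projInit.measurable hΩopen.measurableSet)
  have hFS : ∀ w ∈ S, F w = 0 := by
    intro w hw
    have hwD : projInit n w ∈ D := by rwa [hSpre] at hw
    rw [hF]
    exact if_neg (fun h => hDΩ _ hwD h.2)
  have hFP : ∀ x ∈ Ω, F (e x) = f x := by
    intro x hx
    rw [hF]
    simp only [he]
    rw [if_pos ⟨emb_last x 0, by rw [projInit_emb]; exact hx⟩, projInit_emb]
  set G : EuclideanSpace ℝ (Fin (n+1)) → EuclideanSpace ℝ (Fin (n+1)) → ℝ≥0∞ :=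
    fun z w => ENNReal.ofReal (|F z - F w| ^ p / dist z w ^ α) with hG
  have hGm : Measurable (Function.uncurry G) := by
    apply Measurable.ennreal_ofReal
    refine Measurable.div ?_ ?_
    · exact (Real.continuous_rpow_const hp0.le).measurable.comp
        ((hFmeas.comp measurable_fst).sub (hFmeas.comp measurable_snd)).abs
    · exact (Real.continuous_rpow_const hα).measurable.comp measurable_dist
  have hGsymm : ∀ z w, G z w = G w z := by
    intro z w; simp only [hG, abs_sub_comm, dist_comm]
  -- names for the three right-hand side integrals
  set R1p := ∫⁻ x in Ω, ENNReal.ofReal (|f x| ^ p) with hR1p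
  set R2p := ∫⁻ x in Ω, ∫⁻ y in Ω,
      ENNReal.ofReal (|f x - f y| ^ p / dist x y ^ α) with hR2p
  set R3p := ∫⁻ x in Ω, ENNReal.ofReal (|f x| ^ p / infDist x D ^ (s * p)) with hR3p
  -- ###### Term 1 ######
  have hSzero1 : ∫⁻ z in S, ENNReal.ofReal (|F z| ^ p) ∂μH[(n:ℝ)] = 0 := by
    calc ∫⁻ z in S, ENNReal.ofReal (|F z| ^ p) ∂μH[(n:ℝ)]
        = ∫⁻ _ in S, (0:ℝ≥0∞) ∂μH[(n:ℝ)] := by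
          refine setLIntegral_congr_fun hSmeas (fun z hz => ?_)
          rw [hFS z hz, abs_zero, Real.zero_rpow hp0', ENNReal.ofReal_zero]
      _ = 0 := lintegral_zero
  have hT1 : ∫⁻ z in ΩD, ENNReal.ofReal (|F z| ^ p) ∂μH[(n:ℝ)] ≤ (c:ℝ≥0∞) * R1p := by
    rw [hΩD']
    calc ∫⁻ z in P ∪ S, ENNReal.ofReal (|F z| ^ p) ∂μH[(n:ℝ)]
        ≤ ∫⁻ z, ENNReal.ofReal (|F z| ^ p)
            ∂((μH[(n:ℝ)]).restrict P + (μH[(n:ℝ)]).restrict S) :=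
          lintegral_mono' (Measure.restrict_union_le _ _) le_rfl
      _ = ∫⁻ z in P, ENNReal.ofReal (|F z| ^ p) ∂μH[(n:ℝ)]
            + ∫⁻ z in S, ENNReal.ofReal (|F z| ^ p) ∂μH[(n:ℝ)] := lintegral_add_measure _ _ _
      _ = ∫⁻ z in P, ENNReal.ofReal (|F z| ^ p) ∂μH[(n:ℝ)] := by rw [hSzero1, add_zero]
      _ = ∫⁻ x in Ω, ENNReal.ofReal (|F (e x)| ^ p) ∂μH[(n:ℝ)] := lintegral_image_emb Ω _
      _ = ∫⁻ x in Ω, ENNReal.ofReal (|f x| ^ p) ∂μH[(n:ℝ)] := by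
          refine setLIntegral_congr_fun hΩopen.measurableSet (fun x hx => ?_)
          rw [hFP x hx]
      _ ≤ (c:ℝ≥0∞) * R1p := lintegral_H_le hc _ _
  -- ###### Term 2 ######
  have hIPmeas : Measurable (fun z => ∫⁻ w in P, G z w ∂μH[(n:ℝ)]) :=
    hGm.lintegral_prod_right'
  have hinner : ∀ z, ∫⁻ w in ΩD, G z w ∂μH[(n:ℝ)]
      ≤ (∫⁻ w in P, G z w ∂μH[(n:ℝ)]) + ∫⁻ w in S, G z w ∂μH[(n:ℝ)] := by
    intro z
    rw [hΩD']
    calc ∫⁻ w in P ∪ S, G z w ∂μH[(n:ℝ)]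
        ≤ ∫⁻ w, G z w ∂((μH[(n:ℝ)]).restrict P + (μH[(n:ℝ)]).restrict S) :=
          lintegral_mono' (Measure.restrict_union_le _ _) le_rfl
      _ = _ := lintegral_add_measure _ _ _
  have hISz : ∀ z ∈ S, ∫⁻ w in S, G z w ∂μH[(n:ℝ)] = 0 := by
    intro z hz
    have hzero : ∀ w ∈ S, G z w = 0 := by
      intro w hw
      simp only [hG, hFS z hz, hFS w hw, sub_zero, abs_zero, Real.zero_rpow hp0', zero_div,
        ENNReal.ofReal_zero]
    calc ∫⁻ w in S, G z w ∂μH[(n:ℝ)] = ∫⁻ _ in S, (0:ℝ≥0∞) ∂μH[(n:ℝ)] :=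
          setLIntegral_congr_fun hSmeas hzero
      _ = 0 := lintegral_zero
  have hSS : ∫⁻ z in S, (∫⁻ w in S, G z w ∂μH[(n:ℝ)]) ∂μH[(n:ℝ)] = 0 := by
    calc ∫⁻ z in S, (∫⁻ w in S, G z w ∂μH[(n:ℝ)]) ∂μH[(n:ℝ)]
        = ∫⁻ _ in S, (0:ℝ≥0∞) ∂μH[(n:ℝ)] :=
          setLIntegral_congr_fun hSmeas hISz
      _ = 0 := lintegral_zero
  have hSP : ∫⁻ z in S, (∫⁻ w in P, G z w ∂μH[(n:ℝ)]) ∂μH[(n:ℝ)]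
      = ∫⁻ z in P, (∫⁻ w in S, G z w ∂μH[(n:ℝ)]) ∂μH[(n:ℝ)] := by
    have hsw := lintegral_lintegral_swap (μ := (μH[(n:ℝ)]).restrict S)
      (ν := (μH[(n:ℝ)]).restrict P) (f := G) hGm.aemeasurable
    rw [hsw]
    refine lintegral_congr fun w => ?_
    exact lintegral_congr fun z => (hGsymm z w)
  -- "P × P": the Gagliardo seminorm term
  have hPP : ∫⁻ z in P, (∫⁻ w in P, G z w ∂μH[(n:ℝ)]) ∂μH[(n:ℝ)]
      ≤ (c:ℝ≥0∞) * ((c:ℝ≥0∞) * R2p) := by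
    have heqP : ∫⁻ z in P, (∫⁻ w in P, G z w ∂μH[(n:ℝ)]) ∂μH[(n:ℝ)]
        = ∫⁻ x in Ω, (∫⁻ w in P, G (e x) w ∂μH[(n:ℝ)]) ∂μH[(n:ℝ)] :=
      lintegral_image_emb Ω _
    rw [heqP]
    have hx1 : ∀ x ∈ Ω, ∫⁻ w in P, G (e x) w ∂μH[(n:ℝ)]
        = ∫⁻ y in Ω, ENNReal.ofReal (|f x - f y| ^ p / dist x y ^ α) ∂μH[(n:ℝ)] := by
      intro x hx
      have heq2 : ∫⁻ w in P, G (e x) w ∂μH[(n:ℝ)]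
          = ∫⁻ y in Ω, G (e x) (e y) ∂μH[(n:ℝ)] := lintegral_image_emb Ω _
      rw [heq2]
      refine setLIntegral_congr_fun hΩopen.measurableSet (fun y hy => ?_)
      simp only [hG]
      rw [hFP x hx, hFP y hy, hiso.dist_eq]
    calc ∫⁻ x in Ω, (∫⁻ w in P, G (e x) w ∂μH[(n:ℝ)]) ∂μH[(n:ℝ)]
        = ∫⁻ x in Ω, (∫⁻ y in Ω, ENNReal.ofReal (|f x - f y| ^ p / dist x y ^ α)
            ∂μH[(n:ℝ)]) ∂μH[(n:ℝ)] :=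
          setLIntegral_congr_fun hΩopen.measurableSet hx1
      _ ≤ ∫⁻ x in Ω, (c:ℝ≥0∞) * (∫⁻ y in Ω,
            ENNReal.ofReal (|f x - f y| ^ p / dist x y ^ α)) ∂μH[(n:ℝ)] :=
          lintegral_mono fun x => lintegral_H_le hc _ _
      _ = (c:ℝ≥0∞) * ∫⁻ x in Ω, (∫⁻ y in Ω,
            ENNReal.ofReal (|f x - f y| ^ p / dist x y ^ α)) ∂μH[(n:ℝ)] :=
          lintegral_const_mul' _ _ ENNReal.coe_ne_top
      _ ≤ (c:ℝ≥0∞) * ((c:ℝ≥0∞) * R2p) := by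
          gcongr
          exact lintegral_H_le hc _ _
  -- "P × S": the weighted term
  have hPS : ∫⁻ z in P, (∫⁻ w in S, G z w ∂μH[(n:ℝ)]) ∂μH[(n:ℝ)]
      ≤ ENNReal.ofReal K * ((c:ℝ≥0∞) * R3p) := by
    have heqP : ∫⁻ z in P, (∫⁻ w in S, G z w ∂μH[(n:ℝ)]) ∂μH[(n:ℝ)]
        = ∫⁻ x in Ω, (∫⁻ w in S, G (e x) w ∂μH[(n:ℝ)]) ∂μH[(n:ℝ)] :=
      lintegral_image_emb Ω _
    rw [heqP]
    have key : ∀ x ∈ Ω, ∫⁻ w in S, G (e x) w ∂μH[(n:ℝ)]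
        ≤ ENNReal.ofReal K * ENNReal.ofReal (|f x| ^ p / infDist x D ^ (s * p)) := by
      intro x hx
      have hrw : ∫⁻ w in S, G (e x) w ∂μH[(n:ℝ)]
          = ENNReal.ofReal (|f x| ^ p) *
            ∫⁻ w in S, ENNReal.ofReal ((dist (e x) w ^ α)⁻¹) ∂μH[(n:ℝ)] := by
        rw [← lintegral_const_mul' _ _ ENNReal.ofReal_ne_top]
        refine setLIntegral_congr_fun hSmeas (fun w hw => ?_)
        simp only [hG]
        rw [hFS w hw, hFP x hx, sub_zero, div_eq_mul_inv,
          ENNReal.ofReal_mul (by positivity)]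
      rw [hrw]
      rcases Set.eq_empty_or_nonempty D with hDe | hDne
      · have hSe : S = (∅ : Set (EuclideanSpace ℝ (Fin (n+1)))) := by
          rw [hSpre, hDe]; simp
        rw [hSe, Measure.restrict_empty, lintegral_zero_measure, mul_zero]
        exact zero_le
      · have hnsetU : ∀ z ∈ projInit n ⁻¹' D, ∀ r : ℝ, 0 < r →
            μH[(n:ℝ)] ((projInit n ⁻¹' D) ∩ ball z r) ≤ ENNReal.ofReal (A * r ^ n) := by
          intro z hz r hr
          rw [← hSpre]
          exact (hnset z (by rwa [hSpre]) r hr).2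
        have hJ := key_J hs0 hs1 hp hA hD hnsetU x (hδpos hDne x hx) hDne
        rw [hSpre]
        calc ENNReal.ofReal (|f x| ^ p) *
              ∫⁻ w in projInit n ⁻¹' D, ENNReal.ofReal ((dist (emb n x 0) w ^ α)⁻¹) ∂μH[(n:ℝ)]
            ≤ ENNReal.ofReal (|f x| ^ p) *
              ENNReal.ofReal (K * (infDist x D ^ (s*p))⁻¹) :=
              mul_le_mul_right hJ _
          _ = ENNReal.ofReal K * ENNReal.ofReal (|f x| ^ p / infDist x D ^ (s * p)) := by
              rw [← ENNReal.ofReal_mul (by positivity), ← ENNReal.ofReal_mul hK0.le]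
              congr 1
              rw [div_eq_mul_inv]
              ring
    calc ∫⁻ x in Ω, (∫⁻ w in S, G (e x) w ∂μH[(n:ℝ)]) ∂μH[(n:ℝ)]
        ≤ ∫⁻ x in Ω, ENNReal.ofReal K *
            ENNReal.ofReal (|f x| ^ p / infDist x D ^ (s * p)) ∂μH[(n:ℝ)] :=
          setLIntegral_mono' hΩopen.measurableSet key
      _ = ENNReal.ofReal K *
            ∫⁻ x in Ω, ENNReal.ofReal (|f x| ^ p / infDist x D ^ (s * p)) ∂μH[(n:ℝ)] :=
          lintegral_const_mul' _ _ ENNReal.ofReal_ne_top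
      _ ≤ ENNReal.ofReal K * ((c:ℝ≥0∞) * R3p) := by
          gcongr
          exact lintegral_H_le hc _ _
  -- put the double integral together
  have hT2 : ∫⁻ z in ΩD, (∫⁻ w in ΩD, G z w ∂μH[(n:ℝ)]) ∂μH[(n:ℝ)]
      ≤ (c:ℝ≥0∞) * ((c:ℝ≥0∞) * R2p) + 2 * (ENNReal.ofReal K * ((c:ℝ≥0∞) * R3p)) := by
    calc ∫⁻ z in ΩD, (∫⁻ w in ΩD, G z w ∂μH[(n:ℝ)]) ∂μH[(n:ℝ)]
        ≤ ∫⁻ z in ΩD, ((∫⁻ w in P, G z w ∂μH[(n:ℝ)]) + ∫⁻ w in S, G z w ∂μH[(n:ℝ)])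
            ∂μH[(n:ℝ)] := lintegral_mono fun z => hinner z
      _ ≤ ∫⁻ z, ((∫⁻ w in P, G z w ∂μH[(n:ℝ)]) + ∫⁻ w in S, G z w ∂μH[(n:ℝ)])
            ∂((μH[(n:ℝ)]).restrict P + (μH[(n:ℝ)]).restrict S) := by
          rw [hΩD']
          exact lintegral_mono' (Measure.restrict_union_le _ _) le_rfl
      _ = (∫⁻ z in P, ((∫⁻ w in P, G z w ∂μH[(n:ℝ)]) + ∫⁻ w in S, G z w ∂μH[(n:ℝ)]) ∂μH[(n:ℝ)])
            + ∫⁻ z in S, ((∫⁻ w in P, G z w ∂μH[(n:ℝ)]) + ∫⁻ w in S, G z w ∂μH[(n:ℝ)])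
              ∂μH[(n:ℝ)] := lintegral_add_measure _ _ _
      _ = ((∫⁻ z in P, (∫⁻ w in P, G z w ∂μH[(n:ℝ)]) ∂μH[(n:ℝ)])
              + ∫⁻ z in P, (∫⁻ w in S, G z w ∂μH[(n:ℝ)]) ∂μH[(n:ℝ)])
            + ((∫⁻ z in S, (∫⁻ w in P, G z w ∂μH[(n:ℝ)]) ∂μH[(n:ℝ)])
              + ∫⁻ z in S, (∫⁻ w in S, G z w ∂μH[(n:ℝ)]) ∂μH[(n:ℝ)]) := by
          rw [lintegral_add_left hIPmeas, lintegral_add_left hIPmeas]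
      _ = (∫⁻ z in P, (∫⁻ w in P, G z w ∂μH[(n:ℝ)]) ∂μH[(n:ℝ)])
            + 2 * ∫⁻ z in P, (∫⁻ w in S, G z w ∂μH[(n:ℝ)]) ∂μH[(n:ℝ)] := by
          rw [hSS, hSP, add_zero, two_mul]
          ring
      _ ≤ (c:ℝ≥0∞) * ((c:ℝ≥0∞) * R2p) + 2 * (ENNReal.ofReal K * ((c:ℝ≥0∞) * R3p)) := by
          gcongr
  -- ###### final arithmetic ######
  have h1p0 : (0:ℝ) ≤ 1/p := by positivity
  have h1p1 : (1:ℝ)/p ≤ 1 := by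
    rw [div_le_one hp0]; linarith
  have hcB : (c:ℝ≥0∞) ≤ B := by
    rw [hBdef]; exact le_add_self
  have hccB : (c:ℝ≥0∞) * (c:ℝ≥0∞) ≤ B := by
    rw [hBdef, ← sq]
    exact le_trans le_self_add le_self_add
  have h2KB : 2 * ENNReal.ofReal K * (c:ℝ≥0∞) ≤ B := by
    rw [hBdef]
    exact le_trans le_add_self le_self_add
  have hc2B : (c:ℝ≥0∞) * ((c:ℝ≥0∞) * R2p) + 2 * (ENNReal.ofReal K * ((c:ℝ≥0∞) * R3p))
      ≤ B * (R2p + R3p) := by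
    rw [mul_add]
    gcongr ?_ + ?_
    · calc (c:ℝ≥0∞) * ((c:ℝ≥0∞) * R2p) = ((c:ℝ≥0∞) * (c:ℝ≥0∞)) * R2p := by ring
        _ ≤ B * R2p := mul_le_mul_left hccB _
    · calc 2 * (ENNReal.ofReal K * ((c:ℝ≥0∞) * R3p)) = (2 * ENNReal.ofReal K * (c:ℝ≥0∞)) * R3p := by
            ring
        _ ≤ B * R3p := mul_le_mul_left h2KB _
  have hBrw : B ^ ((1:ℝ)/p) = ENNReal.ofReal (B.toReal ^ (1/p)) := by
    conv_lhs => rw [← ENNReal.ofReal_toReal hBne]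
    rw [ENNReal.ofReal_rpow_of_pos hBt]
  calc (∫⁻ z in ΩD, ENNReal.ofReal (|F z| ^ p) ∂μH[(n:ℝ)]) ^ (1 / p) +
        (∫⁻ z in ΩD, ∫⁻ w in ΩD, G z w ∂μH[(n:ℝ)] ∂μH[(n:ℝ)]) ^ (1 / p)
      ≤ (B * R1p) ^ (1/p) + (B * (R2p + R3p)) ^ (1/p) := by
        gcongr
        · exact le_trans hT1 (by gcongr)
        · exact le_trans hT2 hc2B
    _ = B ^ ((1:ℝ)/p) * (R1p ^ (1/p) + (R2p + R3p) ^ (1/p)) := by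
        rw [ENNReal.mul_rpow_of_nonneg _ _ h1p0, ENNReal.mul_rpow_of_nonneg _ _ h1p0, mul_add]
    _ ≤ B ^ ((1:ℝ)/p) * (R1p ^ (1/p) + (R2p ^ (1/p) + R3p ^ (1/p))) := by
        gcongr
        exact ENNReal.rpow_add_le_add_rpow _ _ h1p0 h1p1
    _ = ENNReal.ofReal (B.toReal ^ (1/p)) * (R1p ^ (1/p) + R2p ^ (1/p) + R3p ^ (1/p)) := by
        rw [hBrw, add_assoc]
end

section
/- Let Ω ⊂ ℝⁿ be a domain supporting the ∂Ω-adapted fractional Hardy inequality: for all f with finite intrinsic norm in W^{s,p}(Ω), ∫_Ω |f(x)|^p dist(x,∂Ω)^{−sp} dx ≤ C ‖f‖^p_{W^{s,p}(Ω)} (s ∈ (0,1), p ∈ [1,∞)). Then the zero extension E₀f (extending f ∈ W^{s,p}(Ω) by 0 to ℝⁿ) satisfies ‖E₀f‖_{W^{s,p}(ℝⁿ)} ≤ C' ‖f‖_{W^{s,p}(Ω)}. Key step: ∫_Ω ∫_{ℝⁿ∖Ω} |f(x)|^p / |x−y|^{n+sp} dy dx ≤ C(n,s,p) ∫_Ω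 |f(x)|^p dist(x,∂Ω)^{−sp} dx. -/
open Metric Set MeasureTheory
open scoped ENNReal

/-- The intrinsic (Gagliardo) fractional Sobolev norm on a set `U`. -/
noncomputable def gagNorm (n : ℕ) (s p : ℝ) (U : Set (EuclideanSpace ℝ (Fin n)))
    (f : EuclideanSpace ℝ (Fin n) → ℝ) : ℝ≥0∞ :=
  (∫⁻ x in U, ENNReal.ofReal (|f x| ^ p)) ^ (1 / p) +
    (∫⁻ x in U, ∫⁻ y in U,
      ENNReal.ofReal (|f x - f y| ^ p / dist x y ^ ((n : ℝ) + s * p))) ^ (1 / p)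

/-- If `x ∈ Ω` (open) and `y ∉ Ω`, then the segment from `x` to `y` crosses the frontier,
so `infDist x (frontier Ω) ≤ dist x y`. -/
lemma aux_infDist_le {n : ℕ} {Ω : Set (EuclideanSpace ℝ (Fin n))} (hΩ : IsOpen Ω)
    {x y : EuclideanSpace ℝ (Fin n)} (hx : x ∈ Ω) (hy : y ∉ Ω) :
    infDist x (frontier Ω) ≤ dist x y := by
  obtain ⟨w, hws, hwf⟩ : (segment ℝ x y ∩ frontier Ω).Nonempty := by
    by_contra hemp
    rw [not_nonempty_iff_eq_empty] at hemp
    have hseg : IsPreconnected (segment ℝ x y) := (convex_segment x y).isPreconnected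
    have hmemf : ∀ z ∈ segment ℝ x y, z ∉ frontier Ω := by
      intro z hz hzf
      have : z ∈ segment ℝ x y ∩ frontier Ω := ⟨hz, hzf⟩
      rw [hemp] at this
      exact this
    have hsub : segment ℝ x y ⊆ Ω ∪ (closure Ω)ᶜ := by
      intro z hz
      by_cases hzΩ : z ∈ Ω
      · exact Or.inl hzΩ
      · refine Or.inr fun hzc => hmemf z hz ⟨hzc, ?_⟩
        rwa [hΩ.interior_eq]
    have h1 : (segment ℝ x y ∩ Ω).Nonempty := ⟨x, left_mem_segment ℝ x y, hx⟩
    have h2 : (segment ℝ x y ∩ (closure Ω)ᶜ).Nonempty := by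
      refine ⟨y, right_mem_segment ℝ x y, fun hyc => ?_⟩
      refine hmemf y (right_mem_segment ℝ x y) ⟨hyc, ?_⟩
      rwa [hΩ.interior_eq]
    obtain ⟨z, _, hzΩ, hzc⟩ :=
      hseg Ω (closure Ω)ᶜ hΩ isClosed_closure.isOpen_compl hsub h1 h2
    exact hzc (subset_closure hzΩ)
  have h1 : infDist x (frontier Ω) ≤ dist x w := infDist_le_dist_of_mem hwf
  have h2 : dist x w + dist w y = dist x y := dist_add_dist_of_mem_segment hws
  have := dist_nonneg (x := w) (y := y)
  linarith

/-- The constant appearing in the annulus-decomposition bound. -/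
noncomputable def crossK (n : ℕ) (σ : ℝ) : ℝ≥0∞ :=
  ENNReal.ofReal ((2 : ℝ) ^ n) * volume (ball (0 : EuclideanSpace ℝ (Fin n)) 1) *
    (1 - ENNReal.ofReal ((2 : ℝ) ^ (-σ)))⁻¹

lemma crossK_ne_top (n : ℕ) {σ : ℝ} (hσ : 0 < σ) : crossK n σ ≠ ⊤ := by
  have h1 : (2 : ℝ) ^ (-σ) < 1 :=
    Real.rpow_lt_one_of_one_lt_of_neg one_lt_two (neg_lt_zero.mpr hσ)
  have h2 : (1 : ℝ≥0∞) - ENNReal.ofReal ((2 : ℝ) ^ (-σ)) ≠ 0 := by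
    intro h
    rw [tsub_eq_zero_iff_le, ← ENNReal.ofReal_one, ENNReal.ofReal_le_ofReal_iff] at h
    · linarith
    · positivity
  exact ENNReal.mul_ne_top (ENNReal.mul_ne_top ENNReal.ofReal_ne_top measure_ball_lt_top.ne)
    (ENNReal.inv_ne_top.mpr h2)

/-- Annulus decomposition: the integral of `a / dist x y ^ (n + σ)` over the complement of a
ball of radius `d` is at most `crossK n σ * (a / d ^ σ)`. -/
lemma lintegral_compl_ball_bound (n : ℕ) {σ : ℝ} (hσ : 0 < σ)
    (x : EuclideanSpace ℝ (Fin n)) {d a : ℝ} (hd : 0 < d) (ha : 0 ≤ a) :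
    ∫⁻ y in {y | d ≤ dist x y}, ENNReal.ofReal (a / dist x y ^ ((n : ℝ) + σ)) ≤
      crossK n σ * ENNReal.ofReal (a / d ^ σ) := by
  rcases Nat.eq_zero_or_pos n with hn | hn
  · subst hn
    have hempty : {y : EuclideanSpace ℝ (Fin 0) | d ≤ dist x y} = ∅ := by
      ext y
      have : y = x := Subsingleton.elim y x
      simp [this, not_le, hd]
    rw [hempty, Measure.restrict_empty, lintegral_zero_measure]
    exact zero_le
  haveI : Nontrivial (EuclideanSpace ℝ (Fin n)) :=
    Module.nontrivial_of_finrank_pos (R := ℝ) (by simpa [finrank_euclideanSpace_fin])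
  have hRpos : (0 : ℝ) < (n : ℝ) + σ := add_pos_of_nonneg_of_pos (Nat.cast_nonneg n) hσ
  set A : ℕ → Set (EuclideanSpace ℝ (Fin n)) :=
    fun k => ball x (d * 2 ^ (k + 1)) \ ball x (d * 2 ^ k) with hA
  have cover : {y | d ≤ dist x y} ⊆ ⋃ k, A k := by
    intro y hy
    simp only [mem_setOf_eq] at hy
    have hP : ∃ k : ℕ, dist x y < d * 2 ^ (k + 1) := by
      obtain ⟨m, hm⟩ := pow_unbounded_of_one_lt (dist x y / d) (one_lt_two (α := ℝ))
      rw [div_lt_iff₀ hd] at hm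
      refine ⟨m, ?_⟩
      have h1 : dist x y < d * 2 ^ m := by linarith
      have h2 : (2 : ℝ) ^ m ≤ 2 ^ (m + 1) := by
        apply pow_le_pow_right₀ (by norm_num) (by omega)
      nlinarith
    refine mem_iUnion.mpr ⟨Nat.find hP, ?_, ?_⟩
    · rw [mem_ball, dist_comm]
      exact Nat.find_spec hP
    · intro hmem
      rw [mem_ball, dist_comm] at hmem
      cases h : Nat.find hP with
      | zero =>
        rw [h] at hmem
        simp only [pow_zero, mul_one] at hmem
        linarith
      | succ j =>
        have hj : ¬ dist x y < d * 2 ^ (j + 1) := Nat.find_min hP (by omega)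
        rw [h] at hmem
        exact hj hmem
  have hVle : ∀ k : ℕ, (∫⁻ y in A k, ENNReal.ofReal (a / dist x y ^ ((n : ℝ) + σ))) ≤
      volume (ball (0 : EuclideanSpace ℝ (Fin n)) 1) *
        (ENNReal.ofReal (2 ^ n * (a / d ^ σ)) * ENNReal.ofReal ((2 : ℝ) ^ (-σ)) ^ k) := by
    intro k
    have hdk : (0 : ℝ) < d * 2 ^ k := by positivity
    have h2k : (0 : ℝ) < (2 : ℝ) ^ k := by positivity
    have hB : ((2 : ℝ) ^ (-σ)) ^ k = (((2 : ℝ) ^ k) ^ σ)⁻¹ := by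
      rw [← Real.rpow_natCast ((2 : ℝ) ^ (-σ)) k, ← Real.rpow_natCast (2 : ℝ) k,
        ← Real.rpow_mul (by norm_num), ← Real.rpow_mul (by norm_num),
        ← Real.rpow_neg (by norm_num)]
      congr 1
      ring
    have hsplit : (d * 2 ^ k) ^ ((n : ℝ) + σ) = (d * 2 ^ k) ^ n * (d ^ σ * ((2 : ℝ) ^ k) ^ σ) := by
      rw [Real.rpow_add hdk, Real.rpow_natCast, Real.mul_rpow hd.le h2k.le]
    have hkey : (d * 2 ^ (k + 1)) ^ n * (a / (d * 2 ^ k) ^ ((n : ℝ) + σ)) =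
        (2 ^ n * (a / d ^ σ)) * ((2 : ℝ) ^ (-σ)) ^ k := by
      rw [hsplit, hB]
      have hd0 : d ≠ 0 := hd.ne'
      have h2k0 : ((2 : ℝ) ^ k) ≠ 0 := h2k.ne'
      have hdσ : d ^ σ ≠ 0 := (Real.rpow_pos_of_pos hd σ).ne'
      have h2kσ : ((2 : ℝ) ^ k) ^ σ ≠ 0 := (Real.rpow_pos_of_pos h2k σ).ne'
      field_simp
      ring
    calc (∫⁻ y in A k, ENNReal.ofReal (a / dist x y ^ ((n : ℝ) + σ)))
        ≤ ∫⁻ _ in A k, ENNReal.ofReal (a / (d * 2 ^ k) ^ ((n : ℝ) + σ)) := by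
          refine setLIntegral_mono measurable_const fun y hy => ?_
          have hdist : d * 2 ^ k ≤ dist x y := by
            have h' := hy.2
            rw [mem_ball, dist_comm] at h'
            exact not_lt.mp h'
          refine ENNReal.ofReal_le_ofReal ?_
          gcongr
      _ = ENNReal.ofReal (a / (d * 2 ^ k) ^ ((n : ℝ) + σ)) * volume (A k) :=
          setLIntegral_const _ _
      _ ≤ ENNReal.ofReal (a / (d * 2 ^ k) ^ ((n : ℝ) + σ)) * volume (ball x (d * 2 ^ (k + 1))) :=
          mul_le_mul_right (measure_mono diff_subset) _
      _ = ENNReal.ofReal (a / (d * 2 ^ k) ^ ((n : ℝ) + σ)) *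
            (ENNReal.ofReal ((d * 2 ^ (k + 1)) ^ n) *
              volume (ball (0 : EuclideanSpace ℝ (Fin n)) 1)) := by
          rw [Measure.addHaar_ball volume x (by positivity), finrank_euclideanSpace_fin]
      _ = volume (ball (0 : EuclideanSpace ℝ (Fin n)) 1) *
            ENNReal.ofReal ((d * 2 ^ (k + 1)) ^ n * (a / (d * 2 ^ k) ^ ((n : ℝ) + σ))) := by
          rw [ENNReal.ofReal_mul (by positivity)]
          ring
      _ = volume (ball (0 : EuclideanSpace ℝ (Fin n)) 1) *
            (ENNReal.ofReal (2 ^ n * (a / d ^ σ)) * ENNReal.ofReal ((2 : ℝ) ^ (-σ)) ^ k) := by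
          rw [hkey, ENNReal.ofReal_mul (by positivity), ENNReal.ofReal_pow (by positivity)]
  calc (∫⁻ y in {y | d ≤ dist x y}, ENNReal.ofReal (a / dist x y ^ ((n : ℝ) + σ)))
      ≤ ∫⁻ y in ⋃ k, A k, ENNReal.ofReal (a / dist x y ^ ((n : ℝ) + σ)) :=
        lintegral_mono_set cover
    _ ≤ ∑' k, ∫⁻ y in A k, ENNReal.ofReal (a / dist x y ^ ((n : ℝ) + σ)) :=
        lintegral_iUnion_le _ _
    _ ≤ ∑' k, volume (ball (0 : EuclideanSpace ℝ (Fin n)) 1) *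
          (ENNReal.ofReal (2 ^ n * (a / d ^ σ)) * ENNReal.ofReal ((2 : ℝ) ^ (-σ)) ^ k) :=
        ENNReal.tsum_le_tsum hVle
    _ = volume (ball (0 : EuclideanSpace ℝ (Fin n)) 1) *
          (ENNReal.ofReal (2 ^ n * (a / d ^ σ)) * ∑' k, ENNReal.ofReal ((2 : ℝ) ^ (-σ)) ^ k) := by
        rw [ENNReal.tsum_mul_left, ENNReal.tsum_mul_left]
    _ = crossK n σ * ENNReal.ofReal (a / d ^ σ) := by
        rw [ENNReal.tsum_geometric, crossK, ENNReal.ofReal_mul (by positivity)]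
        ring

/-- If `Ω` supports the `∂Ω`-adapted fractional Hardy inequality, then the zero extension
is bounded from `W^{s,p}(Ω)` to `W^{s,p}(ℝⁿ)`; the key step is the cross-term bound
`∫_Ω ∫_{Ωᶜ} |f(x)|^p |x-y|^{-(n+sp)} dy dx ≲ ∫_Ω |f(x)|^p dist(x,∂Ω)^{-sp} dx`. -/
theorem stmt_13 {n : ℕ} (s p C₀ : ℝ) (hs : s ∈ Set.Ioo (0:ℝ) 1) (hp : 1 ≤ p)
    (hC₀ : 0 < C₀) (Ω : Set (EuclideanSpace ℝ (Fin n)))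
    (hΩopen : IsOpen Ω) (hΩconn : IsConnected Ω)
    (hardy : ∀ f : EuclideanSpace ℝ (Fin n) → ℝ, Measurable f →
      gagNorm n s p Ω f ≠ ⊤ →
      ∫⁻ x in Ω, ENNReal.ofReal (|f x| ^ p / infDist x (frontier Ω) ^ (s * p)) ≤
        ENNReal.ofReal C₀ * (gagNorm n s p Ω f) ^ p) :
    ∃ C' : ℝ, 0 < C' ∧ ∀ f : EuclideanSpace ℝ (Fin n) → ℝ, Measurable f →
      (∫⁻ x in Ω, ∫⁻ y in Ωᶜ,
          ENNReal.ofReal (|f x| ^ p / dist x y ^ ((n : ℝ) + s * p)))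
        ≤ ENNReal.ofReal C' *
          ∫⁻ x in Ω, ENNReal.ofReal (|f x| ^ p / infDist x (frontier Ω) ^ (s * p)) ∧
      gagNorm n s p Set.univ (Ω.indicator f) ≤ ENNReal.ofReal C' * gagNorm n s p Ω f := by
  obtain ⟨hs0, hs1⟩ := hs
  have hp0 : (0 : ℝ) < p := lt_of_lt_of_le one_pos hp
  have hσ : 0 < s * p := mul_pos hs0 hp0
  set K := crossK n (s * p) with hKdef
  have hKtop : K ≠ ⊤ := crossK_ne_top n hσ
  set C₁ : ℝ := K.toReal + 1 with hC₁
  have hC₁pos : 0 < C₁ := by positivity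
  have hKC₁ : K ≤ ENNReal.ofReal C₁ := by
    conv_lhs => rw [← ENNReal.ofReal_toReal hKtop]
    exact ENNReal.ofReal_le_ofReal (by simp [hC₁])
  have hxnn : 0 ≤ (2 * C₁ * C₀) ^ (1 / p) := Real.rpow_nonneg (by positivity) _
  set C' : ℝ := C₁ + (1 + (2 * C₁ * C₀) ^ (1 / p)) with hC'
  have hC'pos : 0 < C' := by rw [hC']; linarith
  have hC₁C' : C₁ ≤ C' := by rw [hC']; linarith
  have hmΩ : MeasurableSet Ω := hΩopen.measurableSet
  -- the key cross-term bound
  have hcross : ∀ g : EuclideanSpace ℝ (Fin n) → ℝ, Measurable g →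
      (∫⁻ x in Ω, ∫⁻ y in Ωᶜ,
          ENNReal.ofReal (|g x| ^ p / dist x y ^ ((n : ℝ) + s * p)))
        ≤ K * ∫⁻ x in Ω, ENNReal.ofReal (|g x| ^ p / infDist x (frontier Ω) ^ (s * p)) := by
    intro g hg
    have hpt : ∀ x ∈ Ω, (∫⁻ y in Ωᶜ,
        ENNReal.ofReal (|g x| ^ p / dist x y ^ ((n : ℝ) + s * p))) ≤
        K * ENNReal.ofReal (|g x| ^ p / infDist x (frontier Ω) ^ (s * p)) := by
      intro x hx
      by_cases huniv : Ω = univ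
      · have : (Ωᶜ : Set (EuclideanSpace ℝ (Fin n))) = ∅ := by rw [huniv, compl_univ]
        rw [this, Measure.restrict_empty, lintegral_zero_measure]
        exact zero_le
      · haveI : PreconnectedSpace (EuclideanSpace ℝ (Fin n)) :=
          ⟨(convex_univ : Convex ℝ (univ : Set (EuclideanSpace ℝ (Fin n)))).isPreconnected⟩
        have hfr : (frontier Ω).Nonempty :=
          nonempty_frontier_iff.mpr ⟨hΩconn.nonempty, huniv⟩
        have hxf : x ∉ frontier Ω := by
          intro hmem
          have h0 : x ∈ Ω ∩ frontier Ω := ⟨hx, hmem⟩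
          rw [hΩopen.inter_frontier_eq] at h0
          exact h0
        have hd : 0 < infDist x (frontier Ω) :=
          (isClosed_frontier.notMem_iff_infDist_pos hfr).mp hxf
        have hsub : Ωᶜ ⊆ {y | infDist x (frontier Ω) ≤ dist x y} :=
          fun y hy => aux_infDist_le hΩopen hx hy
        exact (lintegral_mono_set hsub).trans
          (lintegral_compl_ball_bound n hσ x hd (by positivity))
    have hmg : Measurable fun x : EuclideanSpace ℝ (Fin n) =>
        K * ENNReal.ofReal (|g x| ^ p / infDist x (frontier Ω) ^ (s * p)) :=
      measurable_const.mul (((hg.abs.pow_const p).div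
        (((continuous_infDist_pt _).measurable).pow_const _)).ennreal_ofReal)
    calc (∫⁻ x in Ω, ∫⁻ y in Ωᶜ,
          ENNReal.ofReal (|g x| ^ p / dist x y ^ ((n : ℝ) + s * p)))
        ≤ ∫⁻ x in Ω, K * ENNReal.ofReal (|g x| ^ p / infDist x (frontier Ω) ^ (s * p)) :=
          setLIntegral_mono hmg hpt
      _ = K * ∫⁻ x in Ω, ENNReal.ofReal (|g x| ^ p / infDist x (frontier Ω) ^ (s * p)) :=
          lintegral_const_mul' _ _ hKtop
  refine ⟨C', hC'pos, fun f hf => ⟨?_, ?_⟩⟩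
  · exact (hcross f hf).trans
      (mul_le_mul_left (hKC₁.trans (ENNReal.ofReal_le_ofReal hC₁C')) _)
  · by_cases hG : gagNorm n s p Ω f = ⊤
    · rw [hG, ENNReal.mul_top (ENNReal.ofReal_pos.mpr hC'pos).ne']
      exact le_top
    -- the finite-norm case
    set G := gagNorm n s p Ω f with hGdef
    set F : EuclideanSpace ℝ (Fin n) → EuclideanSpace ℝ (Fin n) → ℝ≥0∞ :=
      fun x y => ENNReal.ofReal
        (|Ω.indicator f x - Ω.indicator f y| ^ p / dist x y ^ ((n : ℝ) + s * p)) with hF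
    have hif : Measurable (Ω.indicator f) := hf.indicator hmΩ
    have hmeasF : Measurable (Function.uncurry F) :=
      ((((hif.comp measurable_fst).sub (hif.comp measurable_snd)).abs.pow_const p).div
        (measurable_dist.pow_const _)).ennreal_ofReal
    set D := ∫⁻ x in Ω, ∫⁻ y in Ω,
        ENNReal.ofReal (|f x - f y| ^ p / dist x y ^ ((n : ℝ) + s * p)) with hD
    set T := ∫⁻ x in Ω, ∫⁻ y in Ωᶜ,
        ENNReal.ofReal (|f x| ^ p / dist x y ^ ((n : ℝ) + s * p)) with hT
    set L := ∫⁻ x in Ω, ENNReal.ofReal (|f x| ^ p) with hL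
    -- the L^p term of the extension
    have hLeq : (∫⁻ x in univ, ENNReal.ofReal (|Ω.indicator f x| ^ p)) = L := by
      rw [Measure.restrict_univ,
        ← lintegral_add_compl (fun x => ENNReal.ofReal (|Ω.indicator f x| ^ p)) hmΩ]
      have h1 : (∫⁻ x in Ω, ENNReal.ofReal (|Ω.indicator f x| ^ p)) = L :=
        setLIntegral_congr_fun_ae hmΩ (ae_of_all _ fun x hx => by rw [indicator_of_mem hx])
      have h2 : (∫⁻ x in Ωᶜ, ENNReal.ofReal (|Ω.indicator f x| ^ p)) = 0 := by
        have := setLIntegral_congr_fun_ae (μ := volume) (f := fun x => ENNReal.ofReal (|Ω.indicator f x| ^ p))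
          (g := fun _ => 0) hmΩ.compl (ae_of_all _ fun x hx => by
            show ENNReal.ofReal (|Ω.indicator f x| ^ p) = 0
            rw [indicator_of_notMem hx, abs_zero, Real.zero_rpow hp0.ne', ENNReal.ofReal_zero])
        rw [this, lintegral_zero]
      rw [h1, h2, add_zero]
    -- split the double integral
    have e1 : (∫⁻ x in univ, ∫⁻ y in univ, F x y)
        = (∫⁻ x, ∫⁻ y in Ω, F x y) + ∫⁻ x, ∫⁻ y in Ωᶜ, F x y := by
      rw [Measure.restrict_univ]
      have h : ∀ x, (∫⁻ y, F x y) = (∫⁻ y in Ω, F x y) + ∫⁻ y in Ωᶜ, F x y :=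
        fun x => (lintegral_add_compl (F x) hmΩ).symm
      rw [lintegral_congr h]
      exact lintegral_add_left (hmeasF.lintegral_prod_right) _
    have e2 : (∫⁻ x, ∫⁻ y in Ω, F x y)
        = (∫⁻ x in Ω, ∫⁻ y in Ω, F x y) + ∫⁻ x in Ωᶜ, ∫⁻ y in Ω, F x y :=
      (lintegral_add_compl _ hmΩ).symm
    have e3 : (∫⁻ x, ∫⁻ y in Ωᶜ, F x y)
        = (∫⁻ x in Ω, ∫⁻ y in Ωᶜ, F x y) + ∫⁻ x in Ωᶜ, ∫⁻ y in Ωᶜ, F x y :=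
      (lintegral_add_compl _ hmΩ).symm
    have c11 : (∫⁻ x in Ω, ∫⁻ y in Ω, F x y) = D := by
      refine setLIntegral_congr_fun_ae hmΩ (ae_of_all _ fun x hx => ?_)
      refine setLIntegral_congr_fun_ae hmΩ (ae_of_all _ fun y hy => ?_)
      simp only [hF, indicator_of_mem hx, indicator_of_mem hy]
    have c12 : (∫⁻ x in Ω, ∫⁻ y in Ωᶜ, F x y) = T := by
      refine setLIntegral_congr_fun_ae hmΩ (ae_of_all _ fun x hx => ?_)
      refine setLIntegral_congr_fun_ae hmΩ.compl (ae_of_all _ fun y hy => ?_)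
      simp only [hF, indicator_of_mem hx, indicator_of_notMem hy, sub_zero]
    have c22 : (∫⁻ x in Ωᶜ, ∫⁻ y in Ωᶜ, F x y) = 0 := by
      have : (∫⁻ x in Ωᶜ, ∫⁻ y in Ωᶜ, F x y) = ∫⁻ _ in Ωᶜ, (0 : ℝ≥0∞) := by
        refine setLIntegral_congr_fun_ae hmΩ.compl (ae_of_all _ fun x hx => ?_)
        have : (∫⁻ y in Ωᶜ, F x y) = ∫⁻ _ in Ωᶜ, (0 : ℝ≥0∞) := by
          refine setLIntegral_congr_fun_ae hmΩ.compl (ae_of_all _ fun y hy => ?_)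
          simp only [hF, indicator_of_notMem hx, indicator_of_notMem hy, sub_zero, abs_zero,
            Real.zero_rpow hp0.ne', zero_div, ENNReal.ofReal_zero]
        rw [this, lintegral_zero]
      rw [this, lintegral_zero]
    have c21 : (∫⁻ x in Ωᶜ, ∫⁻ y in Ω, F x y) = T := by
      have hstep : (∫⁻ x in Ωᶜ, ∫⁻ y in Ω, F x y)
          = ∫⁻ x in Ωᶜ, ∫⁻ y in Ω,
              ENNReal.ofReal (|f y| ^ p / dist x y ^ ((n : ℝ) + s * p)) := by
        refine setLIntegral_congr_fun_ae hmΩ.compl (ae_of_all _ fun x hx => ?_)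
        refine setLIntegral_congr_fun_ae hmΩ (ae_of_all _ fun y hy => ?_)
        simp only [hF, indicator_of_notMem hx, indicator_of_mem hy, zero_sub, abs_neg]
      have hmeasF2 : AEMeasurable (Function.uncurry fun x y : EuclideanSpace ℝ (Fin n) =>
          ENNReal.ofReal (|f y| ^ p / dist x y ^ ((n : ℝ) + s * p)))
          ((volume.restrict Ωᶜ).prod (volume.restrict Ω)) :=
        ((((hf.comp measurable_snd).abs.pow_const p).div
          (measurable_dist.pow_const _)).ennreal_ofReal).aemeasurable
      rw [hstep, lintegral_lintegral_swap hmeasF2]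
      exact lintegral_congr fun y => lintegral_congr fun x => by rw [dist_comm]
    -- Hardy inequality and assembly
    have hH := hardy f hf hG
    have hTbound : T ≤ ENNReal.ofReal C₁ * (ENNReal.ofReal C₀ * G ^ p) :=
      (hcross f hf).trans (mul_le_mul' hKC₁ hH)
    have h2sum : ENNReal.ofReal C₁ * (ENNReal.ofReal C₀ * G ^ p) +
        ENNReal.ofReal C₁ * (ENNReal.ofReal C₀ * G ^ p) =
        ENNReal.ofReal (2 * C₁ * C₀) * G ^ p := by
      rw [ENNReal.ofReal_mul (by positivity), ENNReal.ofReal_mul (by norm_num : (0:ℝ) ≤ 2),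
        ENNReal.ofReal_ofNat]
      ring
    have hDext : (∫⁻ x in univ, ∫⁻ y in univ, F x y)
        ≤ D + ENNReal.ofReal (2 * C₁ * C₀) * G ^ p := by
      rw [e1, e2, e3, c11, c12, c21, c22, add_zero]
      calc D + T + T = D + (T + T) := by ring
        _ ≤ D + (ENNReal.ofReal C₁ * (ENNReal.ofReal C₀ * G ^ p) +
              ENNReal.ofReal C₁ * (ENNReal.ofReal C₀ * G ^ p)) := by
            gcongr
        _ = D + ENNReal.ofReal (2 * C₁ * C₀) * G ^ p := by rw [h2sum]
    have hGeq : G = L ^ (1 / p) + D ^ (1 / p) := by rw [hGdef]; rfl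
    have hGp : (G ^ p) ^ (1 / p) = G := by
      rw [← ENNReal.rpow_mul, mul_one_div, div_self hp0.ne', ENNReal.rpow_one]
    calc gagNorm n s p univ (Ω.indicator f)
        = L ^ (1 / p) + (∫⁻ x in univ, ∫⁻ y in univ, F x y) ^ (1 / p) := by
          simp only [gagNorm]
          rw [hLeq]
      _ ≤ L ^ (1 / p) + (D + ENNReal.ofReal (2 * C₁ * C₀) * G ^ p) ^ (1 / p) := by
          gcongr
      _ ≤ L ^ (1 / p) + (D ^ (1 / p) + (ENNReal.ofReal (2 * C₁ * C₀) * G ^ p) ^ (1 / p)) := by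
          gcongr
          exact ENNReal.rpow_add_le_add_rpow _ _ (by positivity)
            (by rw [div_le_one hp0]; exact hp)
      _ = G + ENNReal.ofReal (2 * C₁ * C₀) ^ (1 / p) * G := by
          rw [ENNReal.mul_rpow_of_nonneg _ _ (by positivity), hGp, hGeq]
          ring
      _ = (1 + ENNReal.ofReal (2 * C₁ * C₀) ^ (1 / p)) * G := by ring
      _ ≤ ENNReal.ofReal C' * G := by
          refine mul_le_mul_left ?_ _
          rw [ENNReal.ofReal_rpow_of_pos (by positivity), ← ENNReal.ofReal_one,
            ← ENNReal.ofReal_add zero_le_one hxnn]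
          exact ENNReal.ofReal_le_ofReal (by rw [hC']; linarith)
end
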